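/- (Approximate (Φ,f)-Blackwell bound) Let (A, R) be a reward system with rewards in [0, U], Φ a finite set of action transformations, f : R^Φ → R_+^Φ a link function, and let L ∈ Δ(A) be a fixed point of M̃(q) = Σ_φ ỹ_φ [φ](q) / Σ_φ ỹ_φ where ỹ = f(R̃) for an estimate R̃ of the true cumulative regret R ∈ R^Φ (assuming Σ_φ ỹ_φ > 0). Then for any reward function r, f(R) · E_{a∼L}[ρ^Φ(a, r)] ≤ 2U ‖f(R) − f(R̃)‖_1. -/
import Mathlib


open Finset

/-- Approximate (Φ,f)-Blackwell bound: if `L` is a fixed point of the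
matrix built from `ỹ = f(R̃)` (with `Σ ỹ > 0`), rewards lie in `[0,U]`, then
`f(R) · E_{a∼L}[ρ^Φ(a,r)] ≤ 2U ‖f(R) − f(R̃)‖₁`. -/
theorem approx_blackwell_bound
    {A ι : Type*} [Fintype A] [Fintype ι]
    (U : ℝ) (hU : 0 ≤ U)
    (φ : ι → A → A → ℝ) (hφ : ∀ i a, φ i a ∈ stdSimplex ℝ A)
    (f : (ι → ℝ) → ι → ℝ) (hf : ∀ v i, 0 ≤ f v i)
    (R Rtil : ι → ℝ)
    (hden : 0 < ∑ i, f Rtil i)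
    (L : A → ℝ) (hL : L ∈ stdSimplex ℝ A)
    (hfix : ∀ a, (∑ i, f Rtil i * (∑ b, L b * φ i b a)) / (∑ i, f Rtil i) = L a)
    (r : A → ℝ) (hr : ∀ a, r a ∈ Set.Icc 0 U) :
    ∑ i, f R i * (∑ a, L a * ((∑ s, φ i a s * r s) - r a)) ≤
      2 * U * ∑ i, |f R i - f Rtil i| := by
  set g : ι → ℝ := fun i => ∑ a, L a * ((∑ s, φ i a s * r s) - r a) with hg
  obtain ⟨hL0, hL1⟩ := hL
  -- fixed point in multiplied form
  have hfix' : ∀ a, ∑ i, f Rtil i * (∑ b, L b * φ i b a) = (∑ i, f Rtil i) * L a := by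
    intro a
    have h := hfix a
    field_simp at h
    linarith [h]
  -- Σ_i ỹ_i g_i = 0
  have hsum0 : ∑ i, f Rtil i * g i = 0 := by
    have stepB : ∑ i, f Rtil i * ∑ a, L a * (∑ s, φ i a s * r s)
        = ∑ s, (∑ i, f Rtil i * (∑ b, L b * φ i b s)) * r s := by
      calc ∑ i, f Rtil i * ∑ a, L a * (∑ s, φ i a s * r s)
          = ∑ i, ∑ a, ∑ s, f Rtil i * (L a * (φ i a s * r s)) := by
            simp [Finset.mul_sum]
        _ = ∑ i, ∑ s, ∑ a, f Rtil i * (L a * (φ i a s * r s)) := by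
            apply Finset.sum_congr rfl; intro i _; rw [Finset.sum_comm]
        _ = ∑ s, ∑ i, ∑ a, f Rtil i * (L a * (φ i a s * r s)) := by rw [Finset.sum_comm]
        _ = ∑ s, (∑ i, f Rtil i * (∑ b, L b * φ i b s)) * r s := by
            apply Finset.sum_congr rfl; intro s _
            rw [Finset.sum_mul]
            apply Finset.sum_congr rfl; intro i _
            rw [Finset.mul_sum, Finset.sum_mul]
            apply Finset.sum_congr rfl; intro b _
            ring
    have e1 : ∑ i, f Rtil i * g i
        = (∑ s, (∑ i, f Rtil i * (∑ b, L b * φ i b s)) * r s)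
          - (∑ i, f Rtil i) * (∑ a, L a * r a) := by
      rw [← stepB, Finset.sum_mul, ← Finset.sum_sub_distrib]
      apply Finset.sum_congr rfl; intro i _
      simp only [hg, mul_sub, Finset.sum_sub_distrib, Finset.mul_sum]
    rw [e1]
    have : ∑ s, (∑ i, f Rtil i * (∑ b, L b * φ i b s)) * r s
        = (∑ i, f Rtil i) * (∑ a, L a * r a) := by
      rw [Finset.mul_sum]
      apply Finset.sum_congr rfl; intro s _
      rw [hfix' s]; ring
    rw [this]; ring
  -- bound on |g i|
  have hgb : ∀ i, |g i| ≤ U := by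
    intro i
    have h1 : |g i| ≤ ∑ a, L a * U := by
      calc |g i| ≤ ∑ a, |L a * ((∑ s, φ i a s * r s) - r a)| := Finset.abs_sum_le_sum_abs _ _
        _ ≤ ∑ a, L a * U := by
          apply Finset.sum_le_sum
          intro a _
          rw [abs_mul, abs_of_nonneg (hL0 a)]
          apply mul_le_mul_of_nonneg_left _ (hL0 a)
          rw [abs_sub_le_iff]
          have hconv : 0 ≤ ∑ s, φ i a s * r s ∧ ∑ s, φ i a s * r s ≤ U := by
            constructor
            · apply Finset.sum_nonneg; intro s _
              exact mul_nonneg ((hφ i a).1 s) (hr s).1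
            · calc ∑ s, φ i a s * r s ≤ ∑ s, φ i a s * U := by
                    apply Finset.sum_le_sum; intro s _
                    exact mul_le_mul_of_nonneg_left (hr s).2 ((hφ i a).1 s)
                _ = U := by rw [← Finset.sum_mul, (hφ i a).2, one_mul]
          constructor
          · linarith [(hr a).1, hconv.2]
          · linarith [(hr a).2, hconv.1]
    calc |g i| ≤ ∑ a, L a * U := h1
      _ = U := by rw [← Finset.sum_mul, hL1, one_mul]
  -- main chain
  calc ∑ i, f R i * g i = ∑ i, (f R i - f Rtil i) * g i := by
        rw [← sub_eq_zero]
        rw [← Finset.sum_sub_distrib]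
        rw [← hsum0]
        apply Finset.sum_congr rfl; intro i _; ring
    _ ≤ ∑ i, |f R i - f Rtil i| * U := by
        apply Finset.sum_le_sum
        intro i _
        calc (f R i - f Rtil i) * g i ≤ |(f R i - f Rtil i) * g i| := le_abs_self _
          _ = |f R i - f Rtil i| * |g i| := abs_mul _ _
          _ ≤ |f R i - f Rtil i| * U := mul_le_mul_of_nonneg_left (hgb i) (abs_nonneg _)
    _ = U * ∑ i, |f R i - f Rtil i| := by rw [Finset.mul_sum]; apply Finset.sum_congr rfl; intros; ring
    _ ≤ 2 * U * ∑ i, |f R i - f Rtil i| := by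
        have : 0 ≤ ∑ i, |f R i - f Rtil i| := Finset.sum_nonneg fun i _ => abs_nonneg _
        nlinarith
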